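/- Let μ be a Borel probability measure on the n-torus 𝕋ⁿ and let (B₁, B₂, …, Bₙ) be an n-tuple of matrices in Mₙ(ℤ) that is strongly independent over ℚ. If there exists a nonzero column vector k ∈ ℤ^{n×1} such that μ̂(B_i k) = 1 for every 1 ≤ i ≤ n, then the support of μ is a finite set. -/

import Mathlib

open MeasureTheory Filter Matrix Topology
open scoped symmDiff

instance : Fact ((0:ℝ) < 1) := ⟨one_pos⟩

/-- The `n`-torus `𝕋ⁿ = ℝⁿ/ℤⁿ`, as the product of `n` copies of `ℝ/ℤ`. -/
abbrev Torus (n : ℕ) := Fin n → AddCircle (1 : ℝ)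

/-- The `×A` map `T_A` on the `n`-torus, `T_A(x + ℤⁿ) = xA + ℤⁿ` for row vectors `x`. -/
noncomputable def TA {n : ℕ} (A : Matrix (Fin n) (Fin n) ℤ) (x : Torus n) : Torus n :=
  fun j => ∑ i, A i j • x i

/-- The Fourier coefficient `μ̂(k) = ∫_{𝕋ⁿ} z^k dμ(z)` of a measure `μ` on the `n`-torus,
where `z^k = z₁^{k₁} ⋯ zₙ^{kₙ}`. -/
noncomputable def fc {n : ℕ} (μ : Measure (Torus n)) (k : Fin n → ℤ) : ℂ :=
  ∫ x, ∏ i, fourier (k i) (x i) ∂μ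

/-- The support of a measure: the set of points all of whose open neighbourhoods have
positive measure. -/
def msupport {X : Type*} [TopologicalSpace X] [MeasurableSpace X] (μ : Measure X) : Set X :=
  {x | ∀ U : Set X, IsOpen U → x ∈ U → 0 < μ U}

/-- An `n`-tuple `(B 0, …, B (n-1))` of `n × n` matrices over a field `F` is strongly
independent over `F` if for every nonzero column vector `v ∈ F^{n×1}` the vectors
`B 0 v, …, B (n-1) v` are linearly independent over `F`. -/
def StronglyIndependent (F : Type*) [Field F] {n : ℕ}
    (B : Fin n → Matrix (Fin n) (Fin n) F) : Prop :=
  ∀ v : Fin n → F, v ≠ 0 → LinearIndependent F (fun i => (B i).mulVec v)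

/-! ### Auxiliary lemmas -/

/-- The `d`-torsion of the circle is finite, for `d ≠ 0`. -/
lemma torus_aux_torsion_finite (d : ℤ) (hd : d ≠ 0) :
    {y : AddCircle (1:ℝ) | d • y = 0}.Finite := by
  set N := d.natAbs with hN
  have hN0 : 0 < N := Int.natAbs_pos.mpr hd
  have key : {y : AddCircle (1:ℝ) | d • y = 0} ⊆
      ⋃ j ∈ Finset.Icc 1 N, {u : AddCircle (1:ℝ) | addOrderOf u = j} := by
    intro y hy
    have hNy : N • y = 0 := by
      have : (N : ℤ) • y = 0 := by
        rcases Int.natAbs_eq d with h | h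
        · rw [← h]; exact hy
        · rw [← neg_neg ((N:ℤ) • y), ← neg_smul, ← h, hy, neg_zero]
      simpa [natCast_zsmul] using this
    have hdvd : addOrderOf y ∣ N := addOrderOf_dvd_of_nsmul_eq_zero hNy
    have hpos : 0 < addOrderOf y := by
      rcases Nat.eq_zero_or_pos (addOrderOf y) with h | h
      · rw [h] at hdvd; exact absurd (Nat.eq_zero_of_zero_dvd hdvd) hN0.ne'
      · exact h
    simp only [Set.mem_iUnion, Finset.mem_Icc]
    exact ⟨addOrderOf y, ⟨hpos, Nat.le_of_dvd hN0 hdvd⟩, rfl⟩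
  refine Set.Finite.subset ?_ key
  refine Set.Finite.biUnion (Finset.Icc 1 N).finite_toSet ?_
  intro j hj
  simp only [Finset.coe_Icc, Set.mem_Icc] at hj
  have hj0 : 0 < j := hj.1
  have : Finite {m : ℕ | m < j ∧ m.gcd j = 1} := by
    apply Set.Finite.to_subtype
    exact (Set.finite_Iio j).subset (fun m hm => hm.1)
  have := Finite.of_equiv _ (AddCircle.setAddOrderOfEquiv (1:ℝ) hj0).symm
  exact Set.toFinite _

lemma torus_aux_toCircle_sum {ι : Type*} (s : Finset ι) (y : ι → AddCircle (1:ℝ)) :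
    AddCircle.toCircle (∑ j ∈ s, y j) = ∏ j ∈ s, AddCircle.toCircle (y j) := by
  classical
  induction s using Finset.induction_on with
  | empty => simp
  | insert a s h ih => simp [Finset.sum_insert h, Finset.prod_insert h, AddCircle.toCircle_add, ih]

lemma torus_aux_char_eq_one_iff {n : ℕ} (m : Fin n → ℤ) (x : Torus n) :
    (∏ j, fourier (m j) (x j) : ℂ) = 1 ↔ (∑ j, (m j) • x j) = 0 := by
  have key : ((AddCircle.toCircle (∑ j, (m j) • x j) : Circle) : ℂ)
      = ∏ j, fourier (m j) (x j) := by
    calc ((AddCircle.toCircle (∑ j, (m j) • x j) : Circle) : ℂ)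
        = Circle.coeHom (∏ j, AddCircle.toCircle ((m j) • x j)) := by
          rw [torus_aux_toCircle_sum]; rfl
      _ = ∏ j, Circle.coeHom (AddCircle.toCircle ((m j) • x j)) := map_prod _ _ _
      _ = ∏ j, fourier (m j) (x j) := by
          refine Finset.prod_congr rfl fun j _ => ?_
          rw [fourier_apply]; rfl
  rw [← key]
  constructor
  · intro h
    have h2 : AddCircle.toCircle (∑ j, (m j) • x j) = 1 := Circle.coe_injective (by simpa using h)
    have := AddCircle.injective_toCircle (one_ne_zero (α := ℝ))
      (a₁ := ∑ j, (m j) • x j) (a₂ := 0)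
    simp only [AddCircle.toCircle_zero] at this
    exact this h2
  · intro h; rw [h, AddCircle.toCircle_zero]; simp

lemma torus_aux_ae_eq_one {n : ℕ} (μ : Measure (Torus n)) [IsProbabilityMeasure μ]
    (f : Torus n → ℂ) (hf : Continuous f) (hnorm : ∀ x, ‖f x‖ = 1)
    (hint : ∫ x, f x ∂μ = 1) : ∀ᵐ x ∂μ, f x = 1 := by
  have hfi : Integrable f μ := hf.integrable_of_hasCompactSupport
    (isClosed_tsupport f).isCompact
  have hgi : Integrable (fun x => 1 - (f x).re) μ := (integrable_const 1).sub hfi.re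
  have hle : ∀ x, (f x).re ≤ 1 := fun x => by
    calc (f x).re ≤ |(f x).re| := le_abs_self _
      _ ≤ ‖f x‖ := Complex.abs_re_le_norm (f x)
      _ = 1 := hnorm x
  have hg0 : 0 ≤ᵐ[μ] fun x => 1 - (f x).re :=
    ae_of_all _ fun x => by simpa using sub_nonneg.mpr (hle x)
  have h2 : ∫ x, (f x).re ∂μ = 1 := by
    have := integral_re hfi
    rw [hint] at this
    simpa using this
  have hri : Integrable (fun x => (f x).re) μ := hfi.re
  have hgint : ∫ x, (1 - (f x).re) ∂μ = 0 := by
    rw [integral_sub (integrable_const 1) hri, integral_const, h2]; simp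
  have := (integral_eq_zero_iff_of_nonneg_ae hg0 hgi).mp hgint
  filter_upwards [this] with x hx
  have hre : (f x).re = 1 := by
    have : (1:ℝ) - (f x).re = 0 := by simpa using hx
    linarith
  have habs : ‖f x‖ = 1 := hnorm x
  have hsq : Complex.normSq (f x) = 1 := by rw [← Complex.sq_norm, habs]; norm_num
  rw [Complex.normSq_apply] at hsq
  have him : (f x).im = 0 := by nlinarith
  exact Complex.ext (by simp [hre]) (by simp [him])

lemma torus_aux_det_ne_zero {n : ℕ} (B : Fin n → Matrix (Fin n) (Fin n) ℤ)
    (hB : StronglyIndependent ℚ (fun i => (B i).map (Int.cast : ℤ → ℚ)))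
    (k : Fin n → ℤ) (hk : k ≠ 0) :
    (Matrix.of fun i j => (B i).mulVec k j).det ≠ 0 := by
  set M : Matrix (Fin n) (Fin n) ℤ := Matrix.of fun i j => (B i).mulVec k j with hM
  have hv : (fun j => (k j : ℚ)) ≠ 0 := by
    intro h
    apply hk
    funext j
    have := congrFun h j
    simpa using this
  have hli := hB (fun j => (k j : ℚ)) hv
  have hrows : (fun i => ((B i).map (Int.cast : ℤ → ℚ)).mulVec (fun j => (k j : ℚ)))
      = fun i => (M.map (Int.cast : ℤ → ℚ)) i := by
    funext i j
    simp [Matrix.mulVec, dotProduct, Matrix.map_apply, hM]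
  rw [hrows] at hli
  have hunit : IsUnit (M.map (Int.cast : ℤ → ℚ)) :=
    Matrix.linearIndependent_rows_iff_isUnit.mp hli
  have hdet : (M.map (Int.cast : ℤ → ℚ)).det ≠ 0 :=
    isUnit_iff_ne_zero.mp (hunit.map (Matrix.detMonoidHom))
  intro h
  apply hdet
  have : M.map (Int.cast : ℤ → ℚ) = (Int.castRingHom ℚ).mapMatrix M := rfl
  rw [this, ← RingHom.map_det, h]
  simp

lemma torus_aux_det_torsion {n : ℕ} (M : Matrix (Fin n) (Fin n) ℤ) (x : Torus n)
    (hx : ∀ i, (∑ j, (M i j) • x j) = 0) : ∀ j, M.det • x j = 0 := by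
  choose y hy using fun j => QuotientAddGroup.mk_surjective (x j)
  have coe_sum : ∀ (f : Fin n → ℝ),
      ((∑ j, f j : ℝ) : AddCircle (1:ℝ)) = ∑ j, ((f j : ℝ) : AddCircle (1:ℝ)) := fun f =>
    map_sum (QuotientAddGroup.mk' (AddSubgroup.zmultiples (1:ℝ))) f Finset.univ
  have hc : ∀ i, ∃ c : ℤ, (c : ℝ) = ∑ j, (M i j : ℝ) * y j := by
    intro i
    have : ((∑ j, (M i j : ℝ) * y j : ℝ) : AddCircle (1:ℝ)) = 0 := by
      rw [coe_sum, ← hx i]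
      refine Finset.sum_congr rfl fun j _ => ?_
      rw [← hy j, ← AddCircle.coe_zsmul, zsmul_eq_mul]
    obtain ⟨c, hc⟩ := (AddCircle.coe_eq_zero_iff _).mp this
    exact ⟨c, by rw [← hc]; simp⟩
  choose c hcv using hc
  set Mr : Matrix (Fin n) (Fin n) ℝ := M.map (Int.cast : ℤ → ℝ) with hMr
  have hmv : Mr.mulVec y = fun i => (c i : ℝ) := by
    funext i
    simp [Matrix.mulVec, dotProduct, hMr, Matrix.map_apply, hcv i]
  have key : ∀ j, (M.det : ℝ) * y j = ((∑ i, M.adjugate j i * c i : ℤ) : ℝ) := by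
    intro j
    have h1 : Mr.adjugate.mulVec (Mr.mulVec y) = Mr.det • y := by
      rw [Matrix.mulVec_mulVec, Matrix.adjugate_mul, Matrix.smul_mulVec,
        Matrix.one_mulVec]
    have h2 := congrFun h1 j
    rw [hmv] at h2
    have hdet : Mr.det = (M.det : ℝ) := by
      rw [hMr, show M.map (Int.cast : ℤ → ℝ) = (Int.castRingHom ℝ).mapMatrix M from rfl,
        ← RingHom.map_det]
      rfl
    have hadj : Mr.adjugate = (M.adjugate).map (Int.cast : ℤ → ℝ) := by
      rw [hMr, show M.map (Int.cast : ℤ → ℝ) = (Int.castRingHom ℝ).mapMatrix M from rfl,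
        ← RingHom.map_adjugate]
      rfl
    rw [hdet, hadj] at h2
    simp only [Pi.smul_apply, smul_eq_mul] at h2
    rw [← h2]
    push_cast
    simp [Matrix.mulVec, dotProduct, Matrix.map_apply]
  intro j
  rw [← hy j, ← AddCircle.coe_zsmul, AddCircle.coe_eq_zero_iff]
  exact ⟨∑ i, M.adjugate j i * c i, by rw [zsmul_eq_mul, mul_one, zsmul_eq_mul, ← key j]⟩

theorem finite_support_of_strongly_independent
    {n : ℕ} (μ : Measure (Torus n)) [IsProbabilityMeasure μ]
    (B : Fin n → Matrix (Fin n) (Fin n) ℤ)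
    (hB : StronglyIndependent ℚ (fun i => (B i).map (Int.cast : ℤ → ℚ)))
    (k : Fin n → ℤ) (hk : k ≠ 0)
    (h1 : ∀ i : Fin n, fc μ ((B i).mulVec k) = 1) :
    (msupport μ).Finite := by
  classical
  set M : Matrix (Fin n) (Fin n) ℤ := Matrix.of fun i j => (B i).mulVec k j with hM
  set f : Fin n → Torus n → ℂ := fun i x => ∏ j, fourier ((B i).mulVec k j) (x j) with hf
  have hcont : ∀ i, Continuous (f i) := by
    intro i
    apply continuous_finset_prod
    intro j _
    exact (fourier ((B i).mulVec k j)).continuous.comp (continuous_apply j)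
  have hnorm : ∀ i x, ‖f i x‖ = 1 := by
    intro i x
    rw [hf]
    simp only [norm_prod]
    rw [Finset.prod_eq_one]
    intro j _
    rw [fourier_apply]
    exact Circle.norm_coe _
  have hae : ∀ i, ∀ᵐ x ∂μ, f i x = 1 := fun i =>
    torus_aux_ae_eq_one μ (f i) (hcont i) (hnorm i) (h1 i)
  set U : Set (Torus n) := ⋃ i, {x | f i x ≠ 1} with hU
  have hU0 : μ U = 0 := by
    apply measure_iUnion_null
    intro i
    exact (hae i)
  have hUopen : IsOpen U := by
    apply isOpen_iUnion
    intro i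
    exact (isClosed_eq (hcont i) continuous_const).isOpen_compl
  have hsub : msupport μ ⊆ {x : Torus n | ∀ j, M.det • x j = 0} := by
    intro x hx
    have hxU : x ∉ U := by
      intro hxU
      have := hx U hUopen hxU
      rw [hU0] at this
      exact lt_irrefl _ this
    have hall : ∀ i, f i x = 1 := by
      intro i
      by_contra h
      exact hxU (Set.mem_iUnion.mpr ⟨i, h⟩)
    apply torus_aux_det_torsion M x
    intro i
    have := (torus_aux_char_eq_one_iff (fun j => (B i).mulVec k j) x).mp (hall i)
    exact this
  refine Set.Finite.subset ?_ hsub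
  have : {x : Torus n | ∀ j, M.det • x j = 0}
      = Set.pi Set.univ (fun _ => {y : AddCircle (1:ℝ) | M.det • y = 0}) := by
    ext x
    simp [Set.mem_pi]
  rw [this]
  exact Set.Finite.pi fun j => torus_aux_torsion_finite M.det (torus_aux_det_ne_zero B hB k hk)
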